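/- The ideal generated by 3 and 1 + t in the Laurent polynomial ring ℤ[t, t⁻¹] is not a principal ideal. -/

import Mathlib

open LaurentPolynomial Polynomial

/-- Evaluation of an integer Laurent polynomial at a unit of `ZMod 3`. -/
noncomputable def alexEv (u : (ZMod 3)ˣ) : LaurentPolynomial ℤ →ₐ[ℤ] ZMod 3 :=
  AddMonoidAlgebra.lift ℤ (ZMod 3) ℤ ((Units.coeHom (ZMod 3)).comp (zpowersHom (ZMod 3)ˣ u))

lemma alexEv_T (u : (ZMod 3)ˣ) (n : ℤ) : alexEv u (T n) = (u : ZMod 3) ^ n := by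
  rw [alexEv, T, AddMonoidAlgebra.lift_single]; simp

/-- Evaluation of an integer Laurent polynomial at `1`. -/
noncomputable def alexE1 : LaurentPolynomial ℤ →ₐ[ℤ] ℤ :=
  AddMonoidAlgebra.lift ℤ ℤ ℤ 1

lemma alexE1_T (n : ℤ) : alexE1 (T n) = 1 := by
  rw [alexE1, T, AddMonoidAlgebra.lift_single]; simp

lemma alex_prime_span_three :
    (Ideal.span ({3} : Set (LaurentPolynomial ℤ))).IsPrime := by
  haveI := LaurentPolynomial.isLocalization (R := ℤ)
  have hmap : (Ideal.span ({3} : Set (Polynomial ℤ))).map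
      (algebraMap (Polynomial ℤ) (LaurentPolynomial ℤ))
      = Ideal.span ({3} : Set (LaurentPolynomial ℤ)) := by
    rw [Ideal.map_span, Set.image_singleton, map_ofNat]
  have hp : (Ideal.span ({3} : Set (Polynomial ℤ))).IsPrime := by
    rw [Ideal.span_singleton_prime (by norm_num)]
    have : (3 : Polynomial ℤ) = Polynomial.C 3 := by simp
    rw [this, Polynomial.prime_C_iff]
    exact Int.prime_three
  have hd : Disjoint ((Submonoid.powers (X : Polynomial ℤ)) : Set (Polynomial ℤ))
      ((Ideal.span ({3} : Set (Polynomial ℤ))) : Set (Polynomial ℤ)) := by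
    rw [Set.disjoint_left]
    rintro x ⟨n, rfl⟩ hx
    rw [SetLike.mem_coe, Ideal.mem_span_singleton] at hx
    obtain ⟨c, hc⟩ := hx
    simp only at hc
    have h1 : ((X : Polynomial ℤ) ^ n).coeff n = 1 := by simp
    have h2 : (3 : Polynomial ℤ) = Polynomial.C 3 := by simp
    rw [hc, h2, Polynomial.coeff_C_mul] at h1
    omega
  have := IsLocalization.isPrime_of_isPrime_disjoint
    (Submonoid.powers (X : Polynomial ℤ)) (LaurentPolynomial ℤ) _ hp hd
  rwa [hmap] at this

/-- The ideal `(3, 1 + t)` in the Laurent polynomial ring `ℤ[t, t⁻¹]` is not principal. -/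
theorem alexander_ideal_not_principal :
    ¬ (Ideal.span ({3, 1 + LaurentPolynomial.T 1} : Set (LaurentPolynomial ℤ))).IsPrincipal := by
  rintro ⟨g, hg⟩
  have h3 : (3 : LaurentPolynomial ℤ) ∈
      Ideal.span ({3, 1 + LaurentPolynomial.T 1} : Set (LaurentPolynomial ℤ)) :=
    Ideal.subset_span (by simp)
  have ht : (1 + T 1 : LaurentPolynomial ℤ) ∈
      Ideal.span ({3, 1 + LaurentPolynomial.T 1} : Set (LaurentPolynomial ℤ)) :=
    Ideal.subset_span (by simp)
  rw [hg, Submodule.mem_span_singleton] at h3 ht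
  obtain ⟨a, ha⟩ := h3
  obtain ⟨b, hb⟩ := ht
  simp only [smul_eq_mul] at ha hb
  -- `a * g = 3`, so by primality `3 ∣ g` or `3 ∣ a`
  have hmem : a * g ∈ Ideal.span ({3} : Set (LaurentPolynomial ℤ)) := by
    rw [ha]; exact Ideal.mem_span_singleton_self 3
  rcases alex_prime_span_three.mem_or_mem hmem with haa | hga
  · -- 3 ∣ a : then g is a unit, so 1 ∈ the ideal; evaluate at t = -1 in ZMod 3
    rw [Ideal.mem_span_singleton] at haa
    obtain ⟨c, hc⟩ := haa
    have h1 : (3 : LaurentPolynomial ℤ) * 1 = 3 * (c * g) := by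
      rw [mul_one]; nth_rewrite 1 [← ha]; rw [hc]; ring
    have h3ne : (3 : LaurentPolynomial ℤ) ≠ 0 := by
      intro h
      have := congrArg alexE1 h
      simp only [map_ofNat, map_zero] at this
      omega
    have hone : (1 : LaurentPolynomial ℤ) = c * g :=
      mul_left_cancel₀ h3ne h1
    have h1mem : (1 : LaurentPolynomial ℤ) ∈
        Ideal.span ({3, 1 + LaurentPolynomial.T 1} : Set (LaurentPolynomial ℤ)) := by
      rw [hg, Submodule.mem_span_singleton]
      exact ⟨c, by rw [smul_eq_mul, ← hone]⟩
    have hker : Ideal.span ({3, 1 + LaurentPolynomial.T 1} : Set (LaurentPolynomial ℤ)) ≤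
        RingHom.ker (alexEv (-1)).toRingHom := by
      rw [Ideal.span_le]
      rintro x (rfl | rfl)
      · rw [SetLike.mem_coe, RingHom.mem_ker, map_ofNat]; decide
      · rw [SetLike.mem_coe, RingHom.mem_ker]
        simp only [AlgHom.toRingHom_eq_coe, RingHom.coe_coe, map_add, map_one, alexEv_T]
        rw [zpow_one]
        decide
    have := hker h1mem
    rw [RingHom.mem_ker] at this
    simp at this
  · -- 3 ∣ g : then 3 ∣ 1 + t; evaluate at t = 1 in ℤ
    rw [Ideal.mem_span_singleton] at hga
    obtain ⟨c, hc⟩ := hga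
    have h2 : (1 + T 1 : LaurentPolynomial ℤ) = 3 * (b * c) := by
      rw [← hb, hc]; ring
    have := congrArg alexE1 h2
    simp only [map_add, map_one, map_mul, map_ofNat, alexE1_T] at this
    omega
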